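/- Let F_q be a finite field, let c ∈ F_q be nonzero, and let A₂ = [[c, 1], [0, c]] ∈ M₂(F_q). If X = [[x₁₁, x₁₂], [x₂₁, x₂₂]] ∈ M₂(F_q) satisfies XA₂X = A₂XA₂ and x₂₁ ≠ 0, then x₂₁ = −c², x₁₁ = 2c − x₂₂, and x₁₂ = c⁻²x₂₂² − 2c⁻¹x₂₂ + 1. -/

import Mathlib

/-- For `A₂ = [[c, 1], [0, c]]` with `c ≠ 0` over a finite field, any solution
`X = [[x₁₁, x₁₂], [x₂₁, x₂₂]]` of `X A₂ X = A₂ X A₂` with `x₂₁ ≠ 0` satisfies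
`x₂₁ = −c²`, `x₁₁ = 2c − x₂₂` and `x₁₂ = c⁻²x₂₂² − 2c⁻¹x₂₂ + 1`. -/
theorem stmt_19 {F : Type*} [Field F] [Fintype F] (c : F) (hc : c ≠ 0)
    (x₁₁ x₁₂ x₂₁ x₂₂ : F)
    (hX : !![x₁₁, x₁₂; x₂₁, x₂₂] * !![c, 1; 0, c] * !![x₁₁, x₁₂; x₂₁, x₂₂] =
      !![c, 1; 0, c] * !![x₁₁, x₁₂; x₂₁, x₂₂] * !![c, 1; 0, c])
    (h21 : x₂₁ ≠ 0) :
    x₂₁ = -c ^ 2 ∧ x₁₁ = 2 * c - x₂₂ ∧ x₁₂ = c⁻¹ ^ 2 * x₂₂ ^ 2 - 2 * c⁻¹ * x₂₂ + 1 := by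
  have e12 := congrFun (congrFun hX 0) 1
  have e21 := congrFun (congrFun hX 1) 0
  have e22 := congrFun (congrFun hX 1) 1
  simp [Matrix.mul_apply, Fin.sum_univ_two] at e12 e21 e22
  have hg : x₂₁ = c ^ 2 - c * x₁₁ - c * x₂₂ := by
    have h := mul_left_cancel₀ h21
      (show x₂₁ * (c * x₁₁ + x₂₁ + x₂₂ * c) = x₂₁ * c ^ 2 by linear_combination e21)
    linear_combination h
  subst hg
  have hs : x₁₁ = 2 * c - x₂₂ := by
    have h : c * c * (x₁₁ + x₂₂ - 2 * c) = 0 := by linear_combination c * e12 + e22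
    rcases mul_eq_zero.mp h with h' | h'
    · rcases mul_eq_zero.mp h' with h'' | h'' <;> exact absurd h'' hc
    · linear_combination h'
  subst hs
  refine ⟨by ring, by ring, ?_⟩
  field_simp
  linear_combination e12
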